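/- Let γ be a finset of X, x ∈ γ, and f : X^n → ℝ symmetric, n ≥ 1. Then the death-difference formula holds: ⟨(γ ∖ {x})_n, f⟩ - ⟨(γ)_n, f⟩ = -n · ⟨(γ ∖ {x})_{n-1}, f(x, ·)⟩. -/

import Mathlib

/-- `⟨(γ)_n, g⟩`: the sum of `g` over all ordered `n`-tuples of pairwise distinct
elements of the finset `γ`. -/
noncomputable def ffPairing {X : Type*} [DecidableEq X] (γ : Finset X) (n : ℕ)
    (g : (Fin n → X) → ℝ) : ℝ :=
  ∑ t ∈ (Fintype.piFinset fun _ : Fin n => γ).filter (fun t => Function.Injective t), g t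

/-- A function of `n` variables is symmetric if it is invariant under permutations
of its arguments. -/
def IsSymmFun {X : Type*} {n : ℕ} (f : (Fin n → X) → ℝ) : Prop :=
  ∀ (σ : Equiv.Perm (Fin n)) (t : Fin n → X), f (t ∘ σ) = f t

lemma cons_comp_perm {X : Type*} {n : ℕ} (i : Fin (n + 1)) (x : X) (s : Fin n → X) :
    Fin.cons x s ∘ ((finSuccEquiv' i).trans (finSuccEquiv n).symm) = i.insertNth x s := by
  funext j
  rcases eq_or_ne j i with rfl | hj
  · simp [finSuccEquiv'_at, finSuccEquiv_symm_none]
  · rcases Fin.exists_succAbove_eq hj with ⟨k, rfl⟩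
    simp [finSuccEquiv'_succAbove, finSuccEquiv_symm_some]

theorem death_difference {X : Type*} [DecidableEq X] (γ : Finset X) (x : X)
    (hx : x ∈ γ) (n : ℕ) (f : (Fin (n + 1) → X) → ℝ) (hf : IsSymmFun f) :
    ffPairing (γ.erase x) (n + 1) f - ffPairing γ (n + 1) f
      = -(n + 1 : ℝ) * ffPairing (γ.erase x) n (fun t => f (Fin.cons x t)) := by
  classical
  set S := (Fintype.piFinset fun _ : Fin (n + 1) => γ).filter (fun t => Function.Injective t)
    with hS
  set T := (Fintype.piFinset fun _ : Fin n => γ.erase x).filter (fun t => Function.Injective t)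
    with hT
  have key : ffPairing γ (n + 1) f =
      ffPairing (γ.erase x) (n + 1) f
        + (n + 1 : ℝ) * ffPairing (γ.erase x) n (fun t => f (Fin.cons x t)) := by
    have hsplit := Finset.sum_filter_add_sum_filter_not S (fun t => ∃ i, t i = x) f
    have h1 : ∑ t ∈ S.filter (fun t => ¬ ∃ i, t i = x), f t
        = ffPairing (γ.erase x) (n + 1) f := by
      apply Finset.sum_congr _ (fun _ _ => rfl)
      ext t
      simp only [hS, Finset.mem_filter, Fintype.mem_piFinset, Finset.mem_erase, not_exists]
      constructor
      · rintro ⟨⟨h1, h2⟩, h3⟩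
        exact ⟨fun i => ⟨h3 i, h1 i⟩, h2⟩
      · rintro ⟨h1, h2⟩
        exact ⟨⟨fun i => (h1 i).2, h2⟩, fun i => (h1 i).1⟩
    have h2 : ∑ t ∈ S.filter (fun t => ∃ i, t i = x), f t
        = ∑ p ∈ (Finset.univ : Finset (Fin (n + 1))) ×ˢ T, f (p.1.insertNth x p.2) := by
      refine (Finset.sum_bij (fun p _ => p.1.insertNth x p.2) ?_ ?_ ?_ ?_).symm
      · rintro ⟨i, s⟩ hp
        simp only [Finset.mem_product, hT, Finset.mem_filter, Fintype.mem_piFinset,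
          Finset.mem_erase] at hp
        obtain ⟨-, hs, hinj⟩ := hp
        simp only [hS, Finset.mem_filter, Fintype.mem_piFinset]
        refine ⟨⟨?_, ?_⟩, ⟨i, ?_⟩⟩
        · intro j
          rcases eq_or_ne j i with rfl | hj
          · simpa using hx
          · rcases Fin.exists_succAbove_eq hj with ⟨k, rfl⟩
            simpa using (hs k).2
        · rw [← cons_comp_perm i x s]
          exact (Fin.cons_injective_of_injective
            (by rintro ⟨k, hk⟩; exact (hs k).1 hk) hinj).comp (Equiv.injective _)
        · simp
      · rintro ⟨i, s⟩ hp ⟨j, u⟩ hq h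
        simp only [Finset.mem_product, hT, Finset.mem_filter, Fintype.mem_piFinset,
          Finset.mem_erase] at hp hq
        simp only at h
        have hij : i = j := by
          by_contra hij
          rcases Fin.exists_succAbove_eq (hij : i ≠ j) with ⟨k, hk⟩
          have := congrFun h i
          rw [Fin.insertNth_apply_same, ← hk, Fin.insertNth_apply_succAbove] at this
          exact (hq.2.1 k).1 this.symm
        subst hij
        have : s = u := by
          have := congrArg (Fin.removeNth i) h
          simpa using this
        simp [this]
      · intro t ht
        simp only [Finset.mem_filter, hS, Fintype.mem_piFinset] at ht
        obtain ⟨⟨hmem, hinj⟩, i, hi⟩ := ht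
        refine ⟨⟨i, Fin.removeNth i t⟩, ?_, ?_⟩
        · simp only [Finset.mem_product, Finset.mem_univ, hT, Finset.mem_filter,
            Fintype.mem_piFinset, Finset.mem_erase, true_and]
          refine ⟨fun k => ⟨?_, hmem _⟩, fun a b hab => ?_⟩
          · intro hk
            exact Fin.succAbove_ne i k (hinj (hk.trans hi.symm))
          · exact Fin.succAbove_right_injective (hinj hab)
        · simp only
          rw [← hi, Fin.insertNth_self_removeNth]
      · rintro ⟨i, s⟩ hp
        rfl
    have h3 : ∀ p ∈ (Finset.univ : Finset (Fin (n + 1))) ×ˢ T,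
        f (p.1.insertNth x p.2) = f (Fin.cons x p.2) := by
      rintro ⟨i, s⟩ -
      rw [← cons_comp_perm i x s, hf]
    rw [Finset.sum_congr rfl h3] at h2
    rw [Finset.sum_product] at h2
    simp only [Finset.sum_const, ffPairing] at h2 ⊢
    rw [← hsplit, h1, h2]
    simp only [Finset.sum_const, Finset.card_univ, Fintype.card_fin, nsmul_eq_mul]
    push_cast
    ring_nf
    simp only [ffPairing, hT]
    ring
  rw [key]
  ring
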